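/- Let X be a nonnegative real random variable with finite expectation. Then there exists an increasing, positive, concave function φ : [0,∞) → (0,∞) with φ(t) → ∞ as t → ∞, such that E[Φ(X)] < ∞, where Φ(t) = ∫₀ᵗ φ(x) dx. -/

import Mathlib

open MeasureTheory ProbabilityTheory Filter
open scoped ENNReal NNReal Topology

namespace DVPAux

/-- index of the segment containing `s` -/
noncomputable def idx (t : ℕ → ℝ) (s : ℝ) : ℕ :=
  Nat.findGreatest (fun n => t n ≤ s) ⌈s⌉₊

/-- length of segment `n` -/
noncomputable def L (t : ℕ → ℝ) (n : ℕ) : ℝ := t (n + 1) - t n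

/-- the piecewise linear concave function -/
noncomputable def phi (t : ℕ → ℝ) (s : ℝ) : ℝ :=
  1 + idx t s + (s - t (idx t s)) / L t (idx t s)

variable {t : ℕ → ℝ} (ht0 : t 0 = 0) (hrec : ∀ n, 2 * t n + 1 ≤ t (n + 1))

section
include ht0 hrec

lemma t_nonneg : ∀ n, 0 ≤ t n := by
  intro n; induction n with
  | zero => simp [ht0]
  | succ n ih => have := hrec n; linarith

lemma t_ge (n : ℕ) : (n : ℝ) ≤ t n := by
  induction n with
  | zero => simp [ht0]
  | succ n ih =>
      have h1 := t_nonneg ht0 hrec n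
      have h2 := hrec n
      push_cast
      linarith

lemma t_lt (n : ℕ) : t n < t (n + 1) := by
  have h1 := hrec n; have h2 := t_nonneg ht0 hrec n; linarith

lemma t_mono : StrictMono t := strictMono_nat_of_lt_succ (t_lt ht0 hrec)

lemma L_ge (n : ℕ) : t n + 1 ≤ L t n := by
  have h1 := hrec n; have h2 := t_nonneg ht0 hrec n
  have : L t n = t (n + 1) - t n := rfl
  linarith

lemma L_pos (n : ℕ) : 0 < L t n := by
  have h1 := L_ge ht0 hrec n; have h2 := t_nonneg ht0 hrec n; linarith

lemma L_mono : Monotone (L t) := by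
  apply monotone_nat_of_le_succ
  intro n
  have h1 := L_ge ht0 hrec (n + 1)
  have h2 := t_nonneg ht0 hrec n
  have e1 : L t n = t (n + 1) - t n := rfl
  linarith

lemma idx_le {s : ℝ} (hs : 0 ≤ s) : t (idx t s) ≤ s :=
  Nat.findGreatest_spec (P := fun n => t n ≤ s) (Nat.zero_le _) (by simpa [ht0] using hs)

lemma idx_lt {s : ℝ} (hs : 0 ≤ s) : s < t (idx t s + 1) := by
  by_contra h
  push_neg at h
  have hbd : idx t s + 1 ≤ ⌈s⌉₊ := by
    have h1 : ((idx t s + 1 : ℕ) : ℝ) ≤ s := le_trans (t_ge ht0 hrec _) h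
    have h2 : s ≤ (⌈s⌉₊ : ℝ) := Nat.le_ceil s
    exact_mod_cast le_trans h1 h2
  exact Nat.findGreatest_is_greatest (P := fun n => t n ≤ s) (Nat.lt_succ_self _) hbd h

lemma idx_unique {s : ℝ} {n : ℕ} (h1 : t n ≤ s) (h2 : s < t (n + 1)) : idx t s = n := by
  have hs : 0 ≤ s := le_trans (t_nonneg ht0 hrec n) h1
  have ha := idx_le ht0 hrec hs
  have hb := idx_lt ht0 hrec hs
  rcases lt_trichotomy (idx t s) n with h | h | h
  · exfalso
    have : t (idx t s + 1) ≤ t n := (t_mono ht0 hrec).monotone (Nat.succ_le_of_lt h)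
    linarith
  · exact h
  · exfalso
    have : t (n + 1) ≤ t (idx t s) := (t_mono ht0 hrec).monotone (Nat.succ_le_of_lt h)
    linarith

lemma idx_mono {a b : ℝ} (ha : 0 ≤ a) (hab : a ≤ b) : idx t a ≤ idx t b := by
  apply Nat.le_findGreatest (P := fun n => t n ≤ b)
  · have h1 : ((idx t a : ℕ) : ℝ) ≤ b :=
      le_trans (t_ge ht0 hrec _) (le_trans (idx_le ht0 hrec ha) hab)
    have h2 : b ≤ (⌈b⌉₊ : ℝ) := Nat.le_ceil b
    exact_mod_cast le_trans h1 h2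
  · exact le_trans (idx_le ht0 hrec ha) hab

lemma idx_t (n : ℕ) : idx t (t n) = n :=
  idx_unique ht0 hrec le_rfl (t_lt ht0 hrec n)

lemma phi_eq {s : ℝ} {n : ℕ} (h1 : t n ≤ s) (h2 : s < t (n + 1)) :
    phi t s = 1 + n + (s - t n) / L t n := by
  rw [phi, idx_unique ht0 hrec h1 h2]

lemma phi_t (n : ℕ) : phi t (t n) = 1 + n := by
  rw [phi, idx_t ht0 hrec]; simp

lemma phi_lb {s : ℝ} (hs : 0 ≤ s) : 1 ≤ phi t s := by
  have h1 := idx_le ht0 hrec hs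
  have h2 : 0 ≤ (s - t (idx t s)) / L t (idx t s) :=
    div_nonneg (by linarith) (L_pos ht0 hrec _).le
  have h3 : (0 : ℝ) ≤ idx t s := Nat.cast_nonneg _
  rw [phi]; linarith

lemma phi_ub {s : ℝ} (hs : 0 ≤ s) : phi t s ≤ idx t s + 2 := by
  have h1 := idx_lt ht0 hrec hs
  have h2 : (s - t (idx t s)) / L t (idx t s) < 1 := by
    rw [div_lt_one (L_pos ht0 hrec _)]
    have : L t (idx t s) = t (idx t s + 1) - t (idx t s) := rfl
    linarith
  rw [phi]; linarith

lemma phi_slope : ∀ d : ℕ, ∀ u v : ℝ, 0 ≤ u → u ≤ v → idx t v - idx t u = d →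
    (v - u) / L t (idx t v) ≤ phi t v - phi t u ∧
      phi t v - phi t u ≤ (v - u) / L t (idx t u) := by
  intro d
  induction d with
  | zero =>
    intro u v hu huv hd
    have hv : 0 ≤ v := le_trans hu huv
    have hle : idx t u ≤ idx t v := idx_mono ht0 hrec hu huv
    have heq : idx t v = idx t u := le_antisymm (Nat.le_of_sub_eq_zero hd) hle
    have hkey : phi t v - phi t u = (v - u) / L t (idx t u) := by
      rw [phi, phi, heq]
      have hL : L t (idx t u) ≠ 0 := (L_pos ht0 hrec _).ne'
      field_simp
      ring
    constructor
    · rw [hkey, heq]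
    · rw [hkey]
  | succ d ih =>
    intro u v hu huv hd
    have hv : 0 ≤ v := le_trans hu huv
    set m := idx t u with hm
    have hmv : m + 1 ≤ idx t v := by omega
    have hw : t (m + 1) ≤ v := le_trans ((t_mono ht0 hrec).monotone hmv) (idx_le ht0 hrec hv)
    have hu_lt : u < t (m + 1) := idx_lt ht0 hrec hu
    have hwnn : 0 ≤ t (m + 1) := t_nonneg ht0 hrec _
    have hidxw : idx t (t (m + 1)) = m + 1 := idx_t ht0 hrec _
    have hLm : 0 < L t m := L_pos ht0 hrec m
    have hLv : 0 < L t (idx t v) := L_pos ht0 hrec _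
    have hstep : phi t (t (m + 1)) - phi t u = (t (m + 1) - u) / L t m := by
      rw [phi_t ht0 hrec, phi, ← hm]
      have hL : L t m ≠ 0 := hLm.ne'
      have hLdef : L t m = t (m + 1) - t m := rfl
      field_simp
      push_cast
      linarith [hLdef]
    obtain ⟨ihl, ihu⟩ := ih (t (m + 1)) v hwnn hw (by rw [hidxw]; omega)
    rw [hidxw] at ihu
    have hLmono1 : L t m ≤ L t (m + 1) := L_mono ht0 hrec (Nat.le_succ m)
    have hLmono2 : L t m ≤ L t (idx t v) := L_mono ht0 hrec (le_trans (Nat.le_succ m) hmv)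
    constructor
    · -- lower bound
      have h1 : (t (m + 1) - u) / L t (idx t v) ≤ (t (m + 1) - u) / L t m := by
        gcongr
      have hsplit : (v - u) / L t (idx t v) =
          (v - t (m + 1)) / L t (idx t v) + (t (m + 1) - u) / L t (idx t v) := by
        ring
      linarith
    · -- upper bound
      have h1 : (v - t (m + 1)) / L t (m + 1) ≤ (v - t (m + 1)) / L t m := by
        gcongr
      have hsplit : (v - u) / L t m =
          (v - t (m + 1)) / L t m + (t (m + 1) - u) / L t m := by
        ring
      linarith

lemma phi_strictMonoOn : StrictMonoOn (phi t) (Set.Ici 0) := by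
  intro a ha b hb hab
  obtain ⟨hl, -⟩ := phi_slope ht0 hrec (idx t b - idx t a) a b ha hab.le rfl
  have : 0 < (b - a) / L t (idx t b) := div_pos (by linarith) (L_pos ht0 hrec _)
  linarith

lemma phi_concave : ConcaveOn ℝ (Set.Ici 0) (phi t) := by
  apply concaveOn_of_slope_anti_adjacent (convex_Ici 0)
  intro x y z hx _ hxy hyz
  have hy : (0 : ℝ) ≤ y := le_trans hx hxy.le
  obtain ⟨h1, -⟩ := phi_slope ht0 hrec (idx t y - idx t x) x y hx hxy.le rfl
  obtain ⟨-, h2⟩ := phi_slope ht0 hrec (idx t z - idx t y) y z hy hyz.le rfl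
  have hyx : 0 < y - x := by linarith
  have hzy : 0 < z - y := by linarith
  have hL : 0 < L t (idx t y) := L_pos ht0 hrec _
  have e1 : (phi t z - phi t y) / (z - y) ≤ 1 / L t (idx t y) := by
    rw [div_le_div_iff₀ hzy hL]
    have h2' := (le_div_iff₀ hL).mp h2
    linarith
  have e2 : 1 / L t (idx t y) ≤ (phi t y - phi t x) / (y - x) := by
    rw [div_le_div_iff₀ hL hyx]
    have h1' := (div_le_iff₀ hL).mp h1
    linarith
  linarith

lemma phi_neg {s : ℝ} (hs : s < 0) : phi t s = 1 + s / L t 0 := by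
  have hidx : idx t s = 0 := by
    classical
    have hceil : ⌈s⌉₊ = 0 := Nat.ceil_eq_zero.2 hs.le
    rw [idx, hceil, Nat.findGreatest_zero]
  rw [phi, hidx, ht0]
  simp

lemma phi_monotone : Monotone (phi t) := by
  intro a b hab
  rcases le_or_gt 0 a with ha | ha
  · exact (phi_strictMonoOn ht0 hrec).monotoneOn ha (le_trans ha hab) hab
  · rcases lt_or_ge b 0 with hb | hb
    · rw [phi_neg ht0 hrec ha, phi_neg ht0 hrec hb]
      have := L_pos ht0 hrec 0
      gcongr
    · have h1 : phi t a ≤ 1 := by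
        rw [phi_neg ht0 hrec ha]
        have h2 : a / L t 0 ≤ 0 :=
          div_nonpos_iff.2 (Or.inr ⟨ha.le, (L_pos ht0 hrec 0).le⟩)
        linarith
      exact le_trans h1 (phi_lb ht0 hrec hb)

lemma phi_tendsto : Tendsto (phi t) atTop atTop := by
  rw [tendsto_atTop]
  intro b
  rw [eventually_atTop]
  refine ⟨t ⌈b⌉₊, fun s hs => ?_⟩
  have h1 : phi t (t ⌈b⌉₊) ≤ phi t s := phi_monotone ht0 hrec hs
  rw [phi_t ht0 hrec] at h1
  have h2 : b ≤ (⌈b⌉₊ : ℝ) := Nat.le_ceil b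
  linarith

end

end DVPAux

open DVPAux in
/-- Lemma: for a nonnegative integrable random variable `X`, there exists an increasing,
positive, concave function `φ` tending to infinity such that `E[Φ(X)] < ∞`, where
`Φ(t) = ∫₀ᵗ φ(x) dx`. -/
theorem stmt0 {Ω : Type*} [MeasurableSpace Ω] (μ : Measure Ω) [IsProbabilityMeasure μ]
    (X : Ω → ℝ) (hXnn : ∀ ω, 0 ≤ X ω) (hXmeas : Measurable X)
    (hXint : Integrable X μ) :
    ∃ φ : ℝ → ℝ,
      StrictMonoOn φ (Set.Ici 0) ∧
      (∀ t ∈ Set.Ici (0 : ℝ), 0 < φ t) ∧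
      ConcaveOn ℝ (Set.Ici 0) φ ∧
      Tendsto φ atTop atTop ∧
      Integrable (fun ω => ∫ x in (0 : ℝ)..(X ω), φ x) μ := by
  classical
  -- total mass
  set C : ℝ≥0∞ := ∫⁻ ω, ENNReal.ofReal (X ω) ∂μ with hCdef
  have hXeq : ∀ ω, (‖X ω‖₊ : ℝ≥0∞) = ENNReal.ofReal (X ω) := fun ω =>
    Real.enorm_eq_ofReal (hXnn ω)
  have hCfin : C < ⊤ := by
    have h := hXint.hasFiniteIntegral
    rw [HasFiniteIntegral] at h
    rw [hCdef]
    calc ∫⁻ ω, ENNReal.ofReal (X ω) ∂μ = ∫⁻ ω, (‖X ω‖₊ : ℝ≥0∞) ∂μ := by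
          exact lintegral_congr fun ω => (hXeq ω).symm
      _ < ⊤ := h
  -- tail integrals
  set A : ℝ → ℝ≥0∞ := fun r => ∫⁻ ω in {ω | r ≤ X ω}, ENNReal.ofReal (X ω) ∂μ with hAdef
  have hAanti : ∀ r r' : ℝ, r ≤ r' → A r' ≤ A r := by
    intro r r' hrr'
    apply lintegral_mono_set
    intro ω hω
    exact le_trans hrr' hω
  have hAleC : ∀ r, A r ≤ C := fun r => setLIntegral_le_lintegral _ _
  -- tail integrals tend to zero (along ℕ)
  have hAtend : Tendsto (fun N : ℕ => A (N : ℝ)) atTop (𝓝 0) := by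
    have key := tendsto_lintegral_of_dominated_convergence (μ := μ)
      (F := fun (N : ℕ) ω => Set.indicator {ω' | (N : ℝ) ≤ X ω'}
        (fun ω' => ENNReal.ofReal (X ω')) ω)
      (f := fun _ => 0) (bound := fun ω => ENNReal.ofReal (X ω))
      (fun N => (ENNReal.measurable_ofReal.comp hXmeas).indicator
        (hXmeas measurableSet_Ici))
      (fun N => Filter.Eventually.of_forall fun ω => Set.indicator_le_self _ _ ω)
      (by rw [← hCdef]; exact hCfin.ne)
      (Filter.Eventually.of_forall fun ω => by
        apply Tendsto.congr' _ tendsto_const_nhds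
        rw [EventuallyEq, eventually_atTop]
        refine ⟨⌈X ω⌉₊ + 1, fun N hN => ?_⟩
        have hX : X ω < (N : ℝ) := by
          have h1 : X ω ≤ (⌈X ω⌉₊ : ℝ) := Nat.le_ceil _
          have h2 : ((⌈X ω⌉₊ + 1 : ℕ) : ℝ) ≤ (N : ℝ) := by exact_mod_cast hN
          push_cast at h2
          linarith
        exact (Set.indicator_of_notMem (by simpa using hX) _).symm)
    simp only [lintegral_zero] at key
    apply key.congr
    intro N
    rw [lintegral_indicator
      (show MeasurableSet {ω' | (N : ℝ) ≤ X ω'} from hXmeas measurableSet_Ici)]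
  -- choose thresholds
  have hτex : ∀ n : ℕ, ∃ N : ℕ, A (N : ℝ) < 4⁻¹ ^ n := by
    intro n
    have hpos : (0 : ℝ≥0∞) < 4⁻¹ ^ n := by
      apply ENNReal.pow_pos
      simp
    exact (hAtend.eventually_lt_const hpos).exists
  choose τ hτ using hτex
  -- the breakpoint sequence
  obtain ⟨t, ht0, htsucc⟩ : ∃ t : ℕ → ℝ, t 0 = 0 ∧
      ∀ n, t (n + 1) = max (τ (n + 1) : ℝ) (2 * t n + 1) :=
    ⟨fun n => Nat.rec 0 (fun n tn => max (τ (n + 1) : ℝ) (2 * tn + 1)) n, rfl, fun n => rfl⟩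
  have hrec : ∀ n, 2 * t n + 1 ≤ t (n + 1) := fun n => (htsucc n) ▸ le_max_right _ _
  have htail : ∀ n, A (t n) ≤ 4⁻¹ ^ n * (C + 1) := by
    intro n
    cases n with
    | zero =>
      calc A (t 0) ≤ C := hAleC _
        _ ≤ C + 1 := le_self_add
        _ = 4⁻¹ ^ 0 * (C + 1) := by simp
    | succ n =>
      have h1 : (τ (n + 1) : ℝ) ≤ t (n + 1) := (htsucc n) ▸ le_max_left _ _
      calc A (t (n + 1)) ≤ A (τ (n + 1)) := hAanti _ _ h1
        _ ≤ 4⁻¹ ^ (n + 1) := (hτ (n + 1)).le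
        _ ≤ 4⁻¹ ^ (n + 1) * (C + 1) := le_mul_of_one_le_right (by simp) le_add_self
  -- the function
  refine ⟨phi t, phi_strictMonoOn ht0 hrec,
    fun s hs => lt_of_lt_of_le one_pos (phi_lb ht0 hrec hs),
    phi_concave ht0 hrec, phi_tendsto ht0 hrec, ?_⟩
  -- integrability
  have hmono : Monotone (phi t) := phi_monotone ht0 hrec
  have hII : ∀ a b : ℝ, IntervalIntegrable (phi t) volume a b := fun a b =>
    hmono.intervalIntegrable
  have hG : Continuous fun b => ∫ x in (0 : ℝ)..b, phi t x :=
    intervalIntegral.continuous_primitive hII 0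
  refine ⟨(hG.measurable.comp hXmeas).aestronglyMeasurable, ?_⟩
  rw [HasFiniteIntegral]
  -- pointwise bounds
  have hGnn : ∀ ω, 0 ≤ ∫ x in (0 : ℝ)..(X ω), phi t x := by
    intro ω
    apply intervalIntegral.integral_nonneg (hXnn ω)
    intro u hu
    exact le_trans zero_le_one (phi_lb ht0 hrec hu.1)
  have hGle : ∀ ω, (∫ x in (0 : ℝ)..(X ω), phi t x) ≤ X ω * phi t (X ω) := by
    intro ω
    have h1 : (∫ x in (0 : ℝ)..(X ω), phi t x) ≤ ∫ _ in (0 : ℝ)..(X ω), phi t (X ω) := by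
      apply intervalIntegral.integral_mono_on (hXnn ω) (hII 0 (X ω)) intervalIntegrable_const
      intro x hx
      exact hmono hx.2
    rwa [intervalIntegral.integral_const, smul_eq_mul, sub_zero] at h1
  -- the dominating series
  set F : ℕ → Ω → ℝ≥0∞ := fun n ω =>
    Set.indicator {ω' | t n ≤ X ω'} (fun ω' => ((n + 2 : ℕ) : ℝ≥0∞) * ENNReal.ofReal (X ω')) ω
    with hFdef
  have key : ∀ ω, (‖∫ x in (0 : ℝ)..(X ω), phi t x‖₊ : ℝ≥0∞) ≤ ∑' n : ℕ, F n ω := by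
    intro ω
    set m := idx t (X ω) with hm
    have h1 : (‖∫ x in (0 : ℝ)..(X ω), phi t x‖₊ : ℝ≥0∞)
        = ENNReal.ofReal (∫ x in (0 : ℝ)..(X ω), phi t x) :=
      Real.enorm_eq_ofReal (hGnn ω)
    have h2 : X ω * phi t (X ω) ≤ ((m + 2 : ℕ) : ℝ) * X ω := by
      have hub := phi_ub ht0 hrec (hXnn ω)
      have h3 : X ω * phi t (X ω) ≤ X ω * ((m : ℝ) + 2) :=
        mul_le_mul_of_nonneg_left (by rw [hm]; exact hub) (hXnn ω)
      push_cast
      linarith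
    have h4 : ENNReal.ofReal (((m + 2 : ℕ) : ℝ) * X ω)
        = ((m + 2 : ℕ) : ℝ≥0∞) * ENNReal.ofReal (X ω) := by
      rw [ENNReal.ofReal_mul (Nat.cast_nonneg _), ENNReal.ofReal_natCast]
    have h5 : F m ω = ((m + 2 : ℕ) : ℝ≥0∞) * ENNReal.ofReal (X ω) := by
      have hmem : ω ∈ {ω' | t m ≤ X ω'} := idx_le ht0 hrec (hXnn ω)
      simp only [hFdef]
      exact Set.indicator_of_mem hmem _
    calc (‖∫ x in (0 : ℝ)..(X ω), phi t x‖₊ : ℝ≥0∞)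
        = ENNReal.ofReal (∫ x in (0 : ℝ)..(X ω), phi t x) := h1
      _ ≤ ENNReal.ofReal (X ω * phi t (X ω)) := ENNReal.ofReal_le_ofReal (hGle ω)
      _ ≤ ENNReal.ofReal (((m + 2 : ℕ) : ℝ) * X ω) := ENNReal.ofReal_le_ofReal h2
      _ = ((m + 2 : ℕ) : ℝ≥0∞) * ENNReal.ofReal (X ω) := h4
      _ = F m ω := h5.symm
      _ ≤ ∑' n : ℕ, F n ω := ENNReal.le_tsum m
  have hFmeas : ∀ n, Measurable (F n) := fun n =>
    (measurable_const.mul (ENNReal.measurable_ofReal.comp hXmeas)).indicator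
      (hXmeas measurableSet_Ici)
  have hFint : ∀ n, ∫⁻ ω, F n ω ∂μ = ((n + 2 : ℕ) : ℝ≥0∞) * A (t n) := by
    intro n
    simp only [hFdef]
    rw [lintegral_indicator
      (show MeasurableSet {ω' | t n ≤ X ω'} from hXmeas measurableSet_Ici)]
    rw [lintegral_const_mul _ hXmeas.ennreal_ofReal]
  have hnat : ∀ n : ℕ, n + 2 ≤ 2 ^ (n + 1) := by
    intro n
    have h1 : n < 2 ^ n := Nat.lt_two_pow_self
    have h2 : 1 ≤ 2 ^ n := Nat.one_le_two_pow
    have h3 : 2 ^ (n + 1) = 2 ^ n + 2 ^ n := by rw [pow_succ, Nat.mul_two]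
    linarith

  have hterm : ∀ n : ℕ, ((n + 2 : ℕ) : ℝ≥0∞) * (4⁻¹ ^ n * (C + 1)) ≤
      (C + 1) * 2 * 2⁻¹ ^ n := by
    intro n
    have h1 : ((n + 2 : ℕ) : ℝ≥0∞) ≤ 2 ^ (n + 1) := by
      calc ((n + 2 : ℕ) : ℝ≥0∞) ≤ ((2 ^ (n + 1) : ℕ) : ℝ≥0∞) := by
            exact_mod_cast Nat.cast_le.2 (hnat n)
        _ = 2 ^ (n + 1) := by push_cast; ring
    have h4 : (4 : ℝ≥0∞)⁻¹ = 2⁻¹ * 2⁻¹ := by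
      rw [show (4 : ℝ≥0∞) = 2 * 2 by norm_num, ENNReal.mul_inv (by simp) (by simp)]
    have hcancel : (2 : ℝ≥0∞) ^ n * 2⁻¹ ^ n = 1 := by
      rw [← mul_pow, ENNReal.mul_inv_cancel two_ne_zero ENNReal.ofNat_ne_top, one_pow]
    calc ((n + 2 : ℕ) : ℝ≥0∞) * (4⁻¹ ^ n * (C + 1))
        ≤ 2 ^ (n + 1) * (4⁻¹ ^ n * (C + 1)) := by gcongr
      _ = (C + 1) * 2 * ((2 ^ n * 2⁻¹ ^ n) * 2⁻¹ ^ n) := by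
          rw [h4, mul_pow]; ring
      _ = (C + 1) * 2 * 2⁻¹ ^ n := by rw [hcancel, one_mul]
  calc ∫⁻ ω, (‖∫ x in (0 : ℝ)..(X ω), phi t x‖₊ : ℝ≥0∞) ∂μ
      ≤ ∫⁻ ω, ∑' n : ℕ, F n ω ∂μ := lintegral_mono key
    _ = ∑' n : ℕ, ∫⁻ ω, F n ω ∂μ := lintegral_tsum fun n => (hFmeas n).aemeasurable
    _ = ∑' n : ℕ, ((n + 2 : ℕ) : ℝ≥0∞) * A (t n) := by
        exact tsum_congr fun n => hFint n
    _ ≤ ∑' n : ℕ, ((n + 2 : ℕ) : ℝ≥0∞) * (4⁻¹ ^ n * (C + 1)) := by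
        exact ENNReal.tsum_le_tsum fun n => mul_le_mul_right (htail n) _
    _ ≤ ∑' n : ℕ, (C + 1) * 2 * 2⁻¹ ^ n := ENNReal.tsum_le_tsum hterm
    _ = (C + 1) * 2 * ∑' n : ℕ, (2⁻¹ : ℝ≥0∞) ^ n := ENNReal.tsum_mul_left
    _ = (C + 1) * 2 * 2 := by
        rw [ENNReal.tsum_geometric, ENNReal.one_sub_inv_two, inv_inv]
    _ < ⊤ := by
        have h1 : C + 1 < ⊤ := by
          rw [ENNReal.add_lt_top]
          exact ⟨hCfin, ENNReal.one_lt_top⟩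
        exact ENNReal.mul_lt_top (ENNReal.mul_lt_top h1 ENNReal.ofNat_lt_top) ENNReal.ofNat_lt_top
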